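/- Let R be a normal subcritical rule. For every T^𝔫_𝔢 ∈ 𝔗∘, the recursively defined coaction Δ^+ : 𝒯 → 𝒯⊗𝒯_+ admits the global formula Δ^+ T^𝔫_𝔢 = Σ_{A} Σ_{𝔢_A, 𝔫_A} (1/𝔢_A!) binom(𝔫, 𝔫_A) (A, 𝔫_A + π𝔢_A, 𝔢|_{E_A}) ⊗ π_+(T/A, [𝔫 − 𝔫_A]_A, 𝔢 + 𝔢_A), where the first sum runs over all non-empty rooted subtrees A of T containing the root, and the second over all 𝔫_A : N_A → ℕ^d with 𝔫_A ≤ 𝔫 and all 𝔢_A : ∂(A,T) → ℕ^d. -/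

import Mathlib

open MeasureTheory
open scoped Classical

noncomputable section

namespace RS

inductive Typ : Type
  | Xi : Typ
  | In : Typ
deriving DecidableEq

/-- multi-indices `ℕ^d` -/
abbrev Nd (d : ℕ) := Fin d → ℕ

/-- edge types `ℰ = 𝔏 × ℕ^d` -/
abbrev ET (d : ℕ) := Typ × Nd d

/-- Decorated rooted trees (with an extended decoration `a : ℝ` at each node),
in the symbolic representation `𝟏^a X^k Ξ_L ∏_{(m,τ) ∈ B} 𝓘_m[τ]`.
Trees of the reduced structure are those with all extended decorations zero. -/
inductive Tr (d : ℕ) : Type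
  | node (a : ℝ) (k : Nd d) (L : List (Nd d)) (B : List (Nd d × Tr d)) : Tr d

namespace Tr

instance {d} : DecidableEq (Tr d) := Classical.decEq _

variable {d : ℕ}

/-- the tree product: join roots, add root decorations -/
def mul : Tr d → Tr d → Tr d
  | node a k L B, node a' k' L' B' => node (a + a') (k + k') (L ++ L') (B ++ B')

/-- the unit tree `𝟏` -/
def one (d : ℕ) : Tr d := node 0 0 [] []

/-- `X^k` -/
def Xpow (k : Nd d) : Tr d := node 0 k [] []

/-- `Ξ_l` -/
def Xi (l : Nd d) : Tr d := node 0 0 [l] []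

/-- `𝓘_m[τ]` -/
def plant (m : Nd d) (τ : Tr d) : Tr d := node 0 0 [] [(m, τ)]

/-- `𝟏^a` -/
def oneA {d : ℕ} (a : ℝ) : Tr d := node a 0 [] []

/-- the `𝔰`-degree of a multi-index -/
def degN (s : Fin d → ℝ) (k : Nd d) : ℝ := ∑ i, (k i : ℝ) * s i

mutual
  /-- the degree `|τ|_𝔰` (ignoring extended decorations) -/
  def deg (s : Fin d → ℝ) (cXi cI : ℝ) : Tr d → ℝ
    | node _ k L B => degN s k + (L.map fun l => cXi - degN s l).sum + degB s cXi cI B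
  def degB (s : Fin d → ℝ) (cXi cI : ℝ) : List (Nd d × Tr d) → ℝ
    | [] => 0
    | y :: ys => (deg s cXi cI y.2 + cI - degN s y.1) + degB s cXi cI ys
end

mutual
  /-- sum of all extended decorations of a tree -/
  def oSum : Tr d → ℝ
    | node a _ _ B => a + oSumB B
  def oSumB : List (Nd d × Tr d) → ℝ
    | [] => 0
    | y :: ys => oSum y.2 + oSumB ys
end

/-- the degree `|τ|₊ = |τ|_𝔰 + Σ_x 𝔬(x)` -/
def degp (s : Fin d → ℝ) (cXi cI : ℝ) (τ : Tr d) : ℝ := deg s cXi cI τ + oSum τ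

/-- trees all of whose extended decorations vanish (i.e. trees of the reduced structure) -/
inductive ZeroO : Tr d → Prop
  | node {k : Nd d} {L : List (Nd d)} {B : List (Nd d × Tr d)} :
      (∀ y ∈ B, ZeroO y.2) → ZeroO (node 0 k L B)

/-- the multiset `𝒩(τ)` of edge decorations at the root -/
def rootN : Tr d → Multiset (ET d)
  | node _ _ L B =>
      (↑(L.map fun l => ((Typ.Xi, l) : ET d)) : Multiset (ET d)) +
      (↑(B.map fun y => ((Typ.In, y.1) : ET d)) : Multiset (ET d))

/-- the polynomial decoration at the root -/
def rootK : Tr d → Nd d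
  | node _ k _ _ => k

/-- the extended decoration at the root -/
def rootO : Tr d → ℝ
  | node a _ _ _ => a

/-- planted trees: `𝟏^a Ξ_l` or `𝟏^a 𝓘_m[σ]` -/
def Planted : Tr d → Prop
  | node _ k L B => k = 0 ∧ L.length + B.length = 1

/-- a tree strongly conforms to a rule `R` if the multiset of outgoing edge
decorations at every node belongs to `R` -/
inductive Conforms (R : Set (Multiset (ET d))) : Tr d → Prop
  | node {a : ℝ} {k : Nd d} {L : List (Nd d)} {B : List (Nd d × Tr d)} :
      rootN (node a k L B) ∈ R → (∀ y ∈ B, Conforms R y.2) →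
      Conforms R (node a k L B)

end Tr

/-- a rule is normal if it is closed under sub-multisets -/
def Normal {d : ℕ} (R : Set (Multiset (ET d))) : Prop :=
  ∀ A B : Multiset (ET d), A ≤ B → B ∈ R → A ∈ R

/-- `reg(N) = Σ_{(𝔱,k) ∈ N} (reg(𝔱) - |k|_𝔰)` -/
def regMS {d : ℕ} (s : Fin d → ℝ) (reg : Typ → ℝ) (N : Multiset (ET d)) : ℝ :=
  (N.map fun o => reg o.1 - Tr.degN s o.2).sum

/-- subcriticality of a rule: there is `reg : 𝔏 → ℝ` with `reg(Ξ) < |Ξ|_𝔰` and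
`reg(𝓘) < |𝓘|_𝔰 + inf_{N ∈ R} reg(N)` -/
def Subcritical {d : ℕ} (s : Fin d → ℝ) (cXi cI : ℝ) (R : Set (Multiset (ET d))) : Prop :=
  ∃ reg : Typ → ℝ, reg Typ.Xi < cXi ∧
    ∃ c : ℝ, (∀ N ∈ R, c ≤ regMS s reg N) ∧ reg Typ.In < cI + c

/-- the set of strongly conforming trees of the reduced structure, `𝔗∘` -/
def Tcirc {d : ℕ} (R : Set (Multiset (ET d))) : Set (Tr d) :=
  {τ | Tr.ZeroO τ ∧ Tr.Conforms R τ}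


/-- the factorial `k! = ∏ (k i)!` of a multi-index -/
def ndFact {d : ℕ} (k : Nd d) : ℕ := ∏ i, (k i).factorial

/-- the (finite, when `s i ≥ 1`) set `{k ∈ ℕ^d : |k|_𝔰 < c}` -/
def lowIdx {d : ℕ} (s : Fin d → ℝ) (c : ℝ) : Finset (Nd d) :=
  (Fintype.piFinset fun _ : Fin d => Finset.range (Nat.ceil (max c 0) + 1)).filter
    fun k => Tr.degN s k < c


variable {d : ℕ}

/-- product on the model of `𝒱 ⊗ 𝒱₊` induced by the tree product on each factor -/
def mul2 (u v : (Tr d × Tr d) →₀ ℝ) : (Tr d × Tr d) →₀ ℝ :=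
  u.sum fun p c => v.sum fun q c' =>
    Finsupp.single (Tr.mul p.1 q.1, Tr.mul p.2 q.2) (c * c')

/-- `Δ⁺ X^k = Σ_{n ≤ k} binom(k,n) X^n ⊗ X^{k-n}` -/
def dpX (k : Nd d) : (Tr d × Tr d) →₀ ℝ :=
  ∑ n ∈ Finset.Iic k,
    Finsupp.single (Tr.Xpow n, Tr.Xpow (k - n)) (∏ i, ((k i).choose (n i) : ℝ))

/-- `Δ⁺ 𝓘_m[τ] = (𝓘_m ⊗ id) Δ⁺τ + Σ_{|l|_𝔰 < |𝓘_m τ|₊} (X^l/l!) ⊗ 𝓘_{l+m}[τ]`,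
given `D = Δ⁺τ` -/
def dpI (s : Fin d → ℝ) (cXi cI : ℝ) (m : Nd d) (τ : Tr d)
    (D : (Tr d × Tr d) →₀ ℝ) : (Tr d × Tr d) →₀ ℝ :=
  (D.sum fun p c => Finsupp.single (Tr.plant m p.1, p.2) c) +
    ∑ l ∈ lowIdx s (Tr.degp s cXi cI τ + cI - Tr.degN s m),
      Finsupp.single (Tr.Xpow l, Tr.plant (l + m) τ) ((ndFact l : ℝ))⁻¹

mutual
  /-- the positive coaction `Δ⁺ : 𝒯 → 𝒯 ⊗ 𝒯₊` (no projection needed on the left) -/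
  def dp (s : Fin d → ℝ) (cXi cI : ℝ) : Tr d → (Tr d × Tr d) →₀ ℝ
    | .node a k L B =>
        mul2 (Finsupp.single (Tr.node a 0 L [], Tr.one d) 1)
          (mul2 (dpX k) (dpB s cXi cI B))
  def dpB (s : Fin d → ℝ) (cXi cI : ℝ) : List (Nd d × Tr d) → (Tr d × Tr d) →₀ ℝ
    | [] => Finsupp.single (Tr.one d, Tr.one d) 1
    | y :: ys => mul2 (dpI s cXi cI y.1 y.2 (dp s cXi cI y.2)) (dpB s cXi cI ys)
end

/-- as `dpI` but with the projection `π₊` (onto the span of trees satisfying `P`)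
applied to the planted tree in the left factor -/
def dpIP (P : Tr d → Prop) (s : Fin d → ℝ) (cXi cI : ℝ) (m : Nd d) (τ : Tr d)
    (D : (Tr d × Tr d) →₀ ℝ) : (Tr d × Tr d) →₀ ℝ :=
  (D.sum fun p c =>
    if P (Tr.plant m p.1) then Finsupp.single (Tr.plant m p.1, p.2) c else 0) +
    ∑ l ∈ lowIdx s (Tr.degp s cXi cI τ + cI - Tr.degN s m),
      Finsupp.single (Tr.Xpow l, Tr.plant (l + m) τ) ((ndFact l : ℝ))⁻¹

mutual
  /-- the positive coproduct `Δ⁺ : 𝒯₊ → 𝒯₊ ⊗ 𝒯₊`, with `π₊` the projection onto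
  the span of the trees satisfying `P` -/
  def dpP (P : Tr d → Prop) (s : Fin d → ℝ) (cXi cI : ℝ) : Tr d → (Tr d × Tr d) →₀ ℝ
    | .node a k L B =>
        mul2 (Finsupp.single (Tr.node a 0 L [], Tr.one d) 1)
          (mul2 (dpX k) (dpPB P s cXi cI B))
  def dpPB (P : Tr d → Prop) (s : Fin d → ℝ) (cXi cI : ℝ) :
      List (Nd d × Tr d) → (Tr d × Tr d) →₀ ℝ
    | [] => Finsupp.single (Tr.one d, Tr.one d) 1
    | y :: ys => mul2 (dpIP P s cXi cI y.1 y.2 (dp s cXi cI y.2)) (dpPB P s cXi cI ys)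
end

variable {d : ℕ}

/-- A tree overlaid with the data of an extraction: at each node, the part `kA ≤ k`
of the polynomial decoration assigned to the extracted subforest, and on each edge a
Boolean (whether the edge belongs to the extracted subforest `A`) together with the
extra edge decoration `𝔢_A` (meaningful on boundary edges only).  Noise edges carry
the data `(l, inA, 𝔢_A)` and kernel edges the data `(m, inA, 𝔢_A, child)`. -/
inductive Ch (d : ℕ) : Type
  | node (a : ℝ) (k kA : Nd d) (L : List (Nd d × Bool × Nd d))
      (B : List (Nd d × Bool × Nd d × Ch d)) : Ch d

namespace Ch

variable {d : ℕ}

mutual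
  /-- the underlying tree -/
  def shape : Ch d → Tr d
    | .node a k _ L B => Tr.node a k (L.map fun x => x.1) (shapeB B)
  def shapeB : List (Nd d × Bool × Nd d × Ch d) → List (Nd d × Tr d)
    | [] => []
    | y :: ys => (y.1, shape y.2.2.2) :: shapeB ys
end

/-- whether this node belongs to `A`, given whether its parent edge does -/
def hasA (pa : Bool) : Ch d → Bool
  | .node _ _ _ L B => pa || L.any (fun x => x.2.1) || B.any (fun y => y.2.1)

/-- validity of extraction data, relative to whether the parent edge is in `A`:
`𝔫_A ≤ 𝔫` supported on nodes of `A`, and `𝔢_A` supported on boundary edges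
(edges not in `A` whose lower endpoint is in `A`). -/
inductive Valid : Bool → Ch d → Prop
  | node {pa : Bool} {a : ℝ} {k kA : Nd d} {L : List (Nd d × Bool × Nd d)}
      {B : List (Nd d × Bool × Nd d × Ch d)} :
      kA ≤ k →
      (hasA pa (Ch.node a k kA L B) = false → kA = 0) →
      (∀ x ∈ L, x.2.1 = true → x.2.2 = 0) →
      (hasA pa (Ch.node a k kA L B) = false → ∀ x ∈ L, x.2.2 = 0) →
      (∀ y ∈ B, y.2.1 = true → y.2.2.1 = 0) →
      (hasA pa (Ch.node a k kA L B) = false → ∀ y ∈ B, y.2.2.1 = 0) →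
      (∀ y ∈ B, Valid y.2.1 y.2.2.2) →
      Valid pa (Ch.node a k kA L B)

/-- validity of the data of a rooted subtree `A` containing the root (used for the
global formula for `Δ⁺`), relative to whether this node belongs to `A`. -/
inductive ValidS : Bool → Ch d → Prop
  | node {inA : Bool} {a : ℝ} {k kA : Nd d} {L : List (Nd d × Bool × Nd d)}
      {B : List (Nd d × Bool × Nd d × Ch d)} :
      kA ≤ k →
      (inA = false → kA = 0) →
      (inA = false → ∀ x ∈ L, x.2.1 = false ∧ x.2.2 = 0) →
      (inA = false → ∀ y ∈ B, y.2.1 = false ∧ y.2.2.1 = 0) →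
      (∀ x ∈ L, x.2.1 = true → x.2.2 = 0) →
      (∀ y ∈ B, y.2.1 = true → y.2.2.1 = 0) →
      (∀ y ∈ B, ValidS y.2.1 y.2.2.2) →
      ValidS inA (Ch.node a k kA L B)

mutual
  /-- the component of the extracted subforest containing this node (meaningful when
  this node belongs to `A`): decorations `𝔫_A + π𝔢_A`, extended decorations kept. -/
  def extr : Ch d → Tr d
    | .node a _ kA L B =>
        Tr.node a (kA + ((L.map fun x => x.2.2).sum + (B.map fun y => y.2.2.1).sum))
          (L.filterMap fun x => if x.2.1 then some x.1 else none) (extrB B)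
  def extrB : List (Nd d × Bool × Nd d × Ch d) → List (Nd d × Tr d)
    | [] => []
    | y :: ys => if y.2.1 then (y.1, extr y.2.2.2) :: extrB ys else extrB ys
end

mutual
  /-- the components of the extracted subforest not containing this node -/
  def comps : Ch d → Multiset (Tr d)
    | .node _ _ _ _ B => compsB B
  def compsB : List (Nd d × Bool × Nd d × Ch d) → Multiset (Tr d)
    | [] => 0
    | y :: ys =>
        (if y.2.1 then comps y.2.2.2
         else (if hasA false y.2.2.2 then {extr y.2.2.2} else 0) + comps y.2.2.2) +
          compsB ys
end

/-- the extracted forest `ℰ(τ; A, 𝔫_A, 𝔢_A)` -/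
def extrF (c : Ch d) : Multiset (Tr d) :=
  (if hasA false c then {extr c} else 0) + comps c

mutual
  /-- the contracted tree `𝒞(τ; A, 𝔫_A, 𝔢_A)`: each connected component of `A` is
  contracted to a single node, carrying decoration `[𝔫 - 𝔫_A]_A`, extended decoration
  `𝔬(A) + |𝔫_A + π𝔢_A|_𝔰`, and the remaining edges are decorated by `𝔢 + 𝔢_A`. -/
  def contract (s : Fin d → ℝ) (cXi cI : ℝ) : Ch d → Tr d
    | .node a k kA L B =>
        contractB s cXi cI
          (Tr.node
            (a + Tr.degN s (kA + ((L.map fun x => x.2.2).sum +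
                (B.map fun y => y.2.2.1).sum)) +
              (L.map fun x => if x.2.1 then cXi - Tr.degN s x.1 else 0).sum +
              (B.map fun y => if y.2.1 then cI - Tr.degN s y.1 else 0).sum)
            (k - kA)
            (L.filterMap fun x => if x.2.1 then none else some (x.1 + x.2.2))
            []) B
  def contractB (s : Fin d → ℝ) (cXi cI : ℝ) :
      Tr d → List (Nd d × Bool × Nd d × Ch d) → Tr d
    | acc, [] => acc
    | acc, y :: ys =>
        contractB s cXi cI
          (Tr.mul acc
            (if y.2.1 then contract s cXi cI y.2.2.2
             else Tr.node 0 0 [] [(y.1 + y.2.2.1, contract s cXi cI y.2.2.2)])) ys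
end

mutual
  /-- the combinatorial weight `binom(𝔫, 𝔫_A) / 𝔢_A!` of the extraction data -/
  def wt : Ch d → ℝ
    | .node _ k kA L B =>
        (∏ i, ((k i).choose (kA i) : ℝ)) *
          (L.map fun x => ((ndFact x.2.2 : ℝ))⁻¹).prod * wtB B
  def wtB : List (Nd d × Bool × Nd d × Ch d) → ℝ
    | [] => 1
    | y :: ys => ((ndFact y.2.2.1 : ℝ))⁻¹ * wt y.2.2.2 * wtB ys
end

end Ch

mutual
  /-- set all extended decorations of a tree to `0` (the projection `𝒬`) -/
  def setO0 : Tr d → Tr d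
    | .node _ k L B => Tr.node 0 k L (setO0B B)
  def setO0B : List (Nd d × Tr d) → List (Nd d × Tr d)
    | [] => []
    | y :: ys => (y.1, setO0 y.2) :: setO0B ys
end

/-- `𝔗₋`: non-planted strongly conforming trees (of the reduced structure) of negative
degree with vanishing polynomial decoration at the root -/
def TMinusRed (R : Set (Multiset (ET d))) (s : Fin d → ℝ) (cXi cI : ℝ) (τ : Tr d) :
    Prop :=
  Tr.ZeroO τ ∧ Tr.Conforms R τ ∧ Tr.deg s cXi cI τ < 0 ∧ Tr.rootK τ = 0 ∧ ¬ Tr.Planted τ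

/-- coefficients of the extraction–contraction coproduct `Δ⁻ : 𝒯 → ℱ₋ ⊗ 𝒯` of the
reduced structure: the coefficient of `F ⊗ σ` in `Δ⁻τ`. -/
def dmRedCoeff (R : Set (Multiset (ET d))) (s : Fin d → ℝ) (cXi cI : ℝ)
    (τ : Tr d) (F : Multiset (Tr d)) (σ : Tr d) : ℝ :=
  ∑ᶠ c ∈ {c : Ch d | Ch.shape c = τ ∧ Ch.Valid false c ∧ Ch.extrF c = F ∧
      setO0 (Ch.contract s cXi cI c) = σ ∧ ∀ ρ ∈ F, TMinusRed R s cXi cI ρ}, Ch.wt c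

/-- coefficients of the multiplicative extension `Δ⁻ : 𝒯₊ → ℱ₋ ⊗ 𝒯₊` (reduced
structure), which never extracts a subforest containing the root -/
def dmRedPCoeff (R : Set (Multiset (ET d))) (s : Fin d → ℝ) (cXi cI : ℝ)
    (τ : Tr d) (F : Multiset (Tr d)) (σ : Tr d) : ℝ :=
  ∑ᶠ c ∈ {c : Ch d | Ch.shape c = τ ∧ Ch.Valid false c ∧ Ch.hasA false c = false ∧
      Ch.extrF c = F ∧ setO0 (Ch.contract s cXi cI c) = σ ∧
      ∀ ρ ∈ F, TMinusRed R s cXi cI ρ}, Ch.wt c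

/-- coefficients of `Δ⁻ : 𝒯₋ → ℱ₋ ⊗ 𝒯₋` (right factor projected by `π₋`) -/
def dmRedMCoeff (R : Set (Multiset (ET d))) (s : Fin d → ℝ) (cXi cI : ℝ)
    (τ : Tr d) (F : Multiset (Tr d)) (σ : Tr d) : ℝ :=
  ∑ᶠ c ∈ {c : Ch d | Ch.shape c = τ ∧ Ch.Valid false c ∧ Ch.extrF c = F ∧
      setO0 (Ch.contract s cXi cI c) = σ ∧ TMinusRed R s cXi cI σ ∧
      ∀ ρ ∈ F, TMinusRed R s cXi cI ρ}, Ch.wt c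

/-- `𝔗∘^ex`: all contractions of strongly conforming (reduced) trees along extracted
subforests with components in `𝔗₋` -/
def TcircEx (R : Set (Multiset (ET d))) (s : Fin d → ℝ) (cXi cI : ℝ) : Set (Tr d) :=
  {σ | ∃ c : Ch d, Tr.ZeroO (Ch.shape c) ∧ Tr.Conforms R (Ch.shape c) ∧
      Ch.Valid false c ∧ Ch.contract s cXi cI c = σ ∧
      ∀ ρ ∈ Ch.extrF c, TMinusRed R s cXi cI ρ}

/-- `𝔗₋^ex`: non-planted trees in `𝔗∘^ex` of negative `𝔰`-degree with vanishing
polynomial decoration at the root -/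
def TMinusEx (R : Set (Multiset (ET d))) (s : Fin d → ℝ) (cXi cI : ℝ) (τ : Tr d) :
    Prop :=
  τ ∈ TcircEx R s cXi cI ∧ Tr.deg s cXi cI τ < 0 ∧ Tr.rootK τ = 0 ∧ ¬ Tr.Planted τ

/-- `𝔗₊^ex`: products `X^k ∏_j 𝓘_{m_j}[τ_j]` with `τ_j ∈ 𝔗∘^ex` and
`|𝓘_{m_j}[τ_j]|₊ > 0` -/
def TPlusEx (R : Set (Multiset (ET d))) (s : Fin d → ℝ) (cXi cI : ℝ) : Tr d → Prop :=
  fun τ => match τ with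
  | .node a _ L B => a = 0 ∧ L = [] ∧
      ∀ y ∈ B, y.2 ∈ TcircEx R s cXi cI ∧
        0 < Tr.degp s cXi cI y.2 + cI - Tr.degN s y.1

/-- coefficients of the extraction–contraction coproduct `Δ⁻_ex : 𝒯^ex → ℱ₋^ex ⊗ 𝒯^ex` -/
def dmExCoeff (R : Set (Multiset (ET d))) (s : Fin d → ℝ) (cXi cI : ℝ)
    (τ : Tr d) (F : Multiset (Tr d)) (σ : Tr d) : ℝ :=
  ∑ᶠ c ∈ {c : Ch d | Ch.shape c = τ ∧ Ch.Valid false c ∧ Ch.extrF c = F ∧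
      Ch.contract s cXi cI c = σ ∧ ∀ ρ ∈ F, TMinusEx R s cXi cI ρ}, Ch.wt c

/-- coefficients of the multiplicative extension `Δ⁻_ex : 𝒯₊^ex → ℱ₋^ex ⊗ 𝒯₊^ex`,
which never extracts a subforest containing the root -/
def dmExPCoeff (R : Set (Multiset (ET d))) (s : Fin d → ℝ) (cXi cI : ℝ)
    (τ : Tr d) (F : Multiset (Tr d)) (σ : Tr d) : ℝ :=
  ∑ᶠ c ∈ {c : Ch d | Ch.shape c = τ ∧ Ch.Valid false c ∧ Ch.hasA false c = false ∧
      Ch.extrF c = F ∧ Ch.contract s cXi cI c = σ ∧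
      ∀ ρ ∈ F, TMinusEx R s cXi cI ρ}, Ch.wt c

/-- coefficients of `Δ⁻_ex : 𝒯₋^ex → ℱ₋^ex ⊗ ℱ₋^ex` (right factor projected) -/
def dmExMCoeff (R : Set (Multiset (ET d))) (s : Fin d → ℝ) (cXi cI : ℝ)
    (τ : Tr d) (F : Multiset (Tr d)) (σ : Tr d) : ℝ :=
  ∑ᶠ c ∈ {c : Ch d | Ch.shape c = τ ∧ Ch.Valid false c ∧ Ch.extrF c = F ∧
      Ch.contract s cXi cI c = σ ∧ TMinusEx R s cXi cI σ ∧
      ∀ ρ ∈ F, TMinusEx R s cXi cI ρ}, Ch.wt c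

variable {d : ℕ}

/-- the set `𝔗₊` of products `X^k ∏_j 𝓘_{m_j}[τ_j]` with `τ_j ∈ 𝔗∘` and
`|𝓘_{m_j}[τ_j]|_𝔰 > 0` (reduced structure) -/
def TPlusRed (R : Set (Multiset (ET d))) (s : Fin d → ℝ) (cXi cI : ℝ) : Tr d → Prop :=
  fun τ => match τ with
  | .node a _ L B => a = 0 ∧ L = [] ∧
      ∀ y ∈ B, Tr.ZeroO y.2 ∧ Tr.Conforms R y.2 ∧
        0 < Tr.deg s cXi cI y.2 + cI - Tr.degN s y.1

section Aux
variable {d : ℕ}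


mutual
  def mkTriv : Tr d → Ch d
    | .node a k L B => Ch.node a k 0 (L.map fun l => (l, false, 0)) (mkTrivB B)
  def mkTrivB : List (Nd d × Tr d) → List (Nd d × Bool × Nd d × Ch d)
    | [] => []
    | y :: ys => (y.1, false, 0, mkTriv y.2) :: mkTrivB ys
end

def eSum (cs : List (Nd d × Bool × Nd d × Ch d)) : Nd d :=
  (cs.map fun y => y.2.2.1).sum

mutual
  def chFin (s : Fin d → ℝ) (cXi cI : ℝ) : Tr d → Finset (Ch d)
    | .node a k L B =>
        ((Finset.Iic k) ×ˢ chBFin s cXi cI B).image fun z =>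
          Ch.node a k z.1 (L.map fun l => (l, true, 0)) z.2
  def chBFin (s : Fin d → ℝ) (cXi cI : ℝ) :
      List (Nd d × Tr d) → Finset (List (Nd d × Bool × Nd d × Ch d))
    | [] => {[]}
    | y :: ys =>
        ((((chFin s cXi cI y.2).image fun c => (true, (0 : Nd d), c)) ∪
            ((lowIdx s (Tr.deg s cXi cI y.2 + cI - Tr.degN s y.1)).image
              fun e => (false, e, mkTriv y.2))) ×ˢ chBFin s cXi cI ys).image
          fun z => (y.1, z.1) :: z.2
end

/-! ### basic `Tr.mul` algebra -/

theorem Tr.mul_assoc (x y z : Tr d) : Tr.mul (Tr.mul x y) z = Tr.mul x (Tr.mul y z) := by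
  cases x; cases y; cases z; simp [Tr.mul, add_assoc]

@[simp] theorem Tr.one_mul (x : Tr d) : Tr.mul (Tr.one d) x = x := by
  cases x; simp [Tr.mul, Tr.one]

@[simp] theorem Tr.mul_one (x : Tr d) : Tr.mul x (Tr.one d) = x := by
  cases x; simp [Tr.mul, Tr.one]

theorem setO0B_append (B B' : List (Nd d × Tr d)) :
    setO0B (B ++ B') = setO0B B ++ setO0B B' := by
  induction B with
  | nil => simp [setO0B]
  | cons y ys ih => simp [setO0B, ih]

theorem setO0_mul (x y : Tr d) :
    setO0 (Tr.mul x y) = Tr.mul (setO0 x) (setO0 y) := by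
  cases x; cases y; simp [Tr.mul, setO0, setO0B_append]

@[simp] theorem rootO_setO0 (x : Tr d) : Tr.rootO (setO0 x) = 0 := by
  cases x; simp [setO0, Tr.rootO]

end Aux
section Aux2
variable {d : ℕ}

mutual
  theorem shape_mkTriv (τ : Tr d) : Ch.shape (mkTriv τ) = τ := by
    cases τ with
    | node a k L B =>
      simp [mkTriv, Ch.shape, shapeB_mkTrivB B, Function.comp_def]
  theorem shapeB_mkTrivB (B : List (Nd d × Tr d)) : Ch.shapeB (mkTrivB B) = B := by
    cases B with
    | nil => simp [mkTrivB, Ch.shapeB]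
    | cons y ys => simp [mkTrivB, Ch.shapeB, shape_mkTriv y.2, shapeB_mkTrivB ys]
end

mutual
  theorem oSum_eq_zero {τ : Tr d} (h : Tr.ZeroO τ) : Tr.oSum τ = 0 := by
    cases τ with
    | node a k L B =>
      cases h with
      | node hB =>
        simp [Tr.oSum, oSumB_eq_zero (fun y hy => hB y hy)]
  theorem oSumB_eq_zero {B : List (Nd d × Tr d)} (h : ∀ y ∈ B, Tr.ZeroO y.2) :
      Tr.oSumB B = 0 := by
    cases B with
    | nil => simp [Tr.oSumB]
    | cons y ys =>
      simp [Tr.oSumB, oSum_eq_zero (h y (by simp)),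
        oSumB_eq_zero (fun z hz => h z (List.mem_cons_of_mem _ hz))]
end

mutual
  theorem setO0_of_zeroO {τ : Tr d} (h : Tr.ZeroO τ) : setO0 τ = τ := by
    cases τ with
    | node a k L B =>
      cases h with
      | node hB =>
        simp [setO0, setO0B_of_zeroO (fun y hy => hB y hy)]
  theorem setO0B_of_zeroO {B : List (Nd d × Tr d)} (h : ∀ y ∈ B, Tr.ZeroO y.2) :
      setO0B B = B := by
    cases B with
    | nil => simp [setO0B]
    | cons y ys =>
      simp [setO0B, setO0_of_zeroO (h y (by simp)),
        setO0B_of_zeroO (fun z hz => h z (List.mem_cons_of_mem _ hz))]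
end

end Aux2
section Aux3
variable {d : ℕ} (s : Fin d → ℝ) (cXi cI : ℝ)

def item (y : Nd d × Bool × Nd d × Ch d) : Tr d :=
  if y.2.1 then Ch.contract s cXi cI y.2.2.2
  else Tr.node 0 0 [] [(y.1 + y.2.2.1, Ch.contract s cXi cI y.2.2.2)]

theorem contractB_acc (cs : List (Nd d × Bool × Nd d × Ch d)) :
    ∀ acc : Tr d, Ch.contractB s cXi cI acc cs =
      Tr.mul acc (Ch.contractB s cXi cI (Tr.one d) cs) := by
  induction cs with
  | nil => intro acc; simp [Ch.contractB]
  | cons y ys ih =>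
    intro acc
    rw [Ch.contractB, Ch.contractB, ih, ih (Tr.mul (Tr.one d) _), ← Tr.mul_assoc,
      Tr.one_mul]

theorem CB_cons (y : Nd d × Bool × Nd d × Ch d) (ys : List (Nd d × Bool × Nd d × Ch d)) :
    Ch.contractB s cXi cI (Tr.one d) (y :: ys) =
      Tr.mul (item s cXi cI y) (Ch.contractB s cXi cI (Tr.one d) ys) := by
  rw [Ch.contractB, contractB_acc, Tr.one_mul, item]

@[simp] theorem CB_nil : Ch.contractB s cXi cI (Tr.one d) [] = Tr.one d := by
  rw [Ch.contractB]

theorem contract_node (a : ℝ) (k kA : Nd d) (L : List (Nd d × Bool × Nd d))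
    (B : List (Nd d × Bool × Nd d × Ch d)) :
    Ch.contract s cXi cI (Ch.node a k kA L B) =
      Tr.mul
        (Tr.node
          (a + Tr.degN s (kA + ((L.map fun x => x.2.2).sum +
              (B.map fun y => y.2.2.1).sum)) +
            (L.map fun x => if x.2.1 then cXi - Tr.degN s x.1 else 0).sum +
            (B.map fun y => if y.2.1 then cI - Tr.degN s y.1 else 0).sum)
          (k - kA)
          (L.filterMap fun x => if x.2.1 then none else some (x.1 + x.2.2))
          [])
        (Ch.contractB s cXi cI (Tr.one d) B) := by
  rw [Ch.contract, contractB_acc]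

theorem mkTrivB_eq_map (B : List (Nd d × Tr d)) :
    mkTrivB B = B.map fun y => (y.1, false, (0 : Nd d), mkTriv y.2) := by
  induction B with
  | nil => rw [mkTrivB]; simp
  | cons y ys ih => rw [mkTrivB, ih]; simp

theorem list_sum_map_zero {α M : Type*} [AddCommMonoid M] (l : List α) :
    (l.map fun _ => (0 : M)).sum = 0 := by
  induction l with
  | nil => simp
  | cons x xs ih => simp [ih]

@[simp] theorem degN_zero : Tr.degN s 0 = 0 := by
  simp [Tr.degN]

theorem degN_add (m e : Nd d) : Tr.degN s (m + e) = Tr.degN s m + Tr.degN s e := by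
  simp [Tr.degN, add_mul, Finset.sum_add_distrib]

mutual
  theorem contract_mkTriv (τ : Tr d) : Ch.contract s cXi cI (mkTriv τ) = τ := by
    cases τ with
    | node a k L B =>
      rw [mkTriv, contract_node, CB_mkTrivB B, mkTrivB_eq_map]
      simp [Tr.mul, List.map_map, Function.comp_def, list_sum_map_zero,
        List.filterMap_map]
  theorem CB_mkTrivB (B : List (Nd d × Tr d)) :
      Ch.contractB s cXi cI (Tr.one d) (mkTrivB B) = Tr.node 0 0 [] B := by
    cases B with
    | nil => rw [mkTrivB, Ch.contractB, Tr.one]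
    | cons y ys =>
      rw [mkTrivB, CB_cons, CB_mkTrivB ys, item]
      simp [Tr.mul, contract_mkTriv y.2]
end

end Aux3
section Aux4
variable {d : ℕ}

theorem map_fst_triv {L : List (Nd d × Bool × Nd d)}
    (h : ∀ x ∈ L, x.2.1 = false ∧ x.2.2 = 0) :
    List.map (fun x => (x.1, false, (0 : Nd d))) L = L := by
  induction L with
  | nil => simp
  | cons x xs ih =>
    obtain ⟨h1, h2⟩ := h x (by simp)
    rw [List.map_cons, ih (fun z hz => h z (List.mem_cons_of_mem _ hz))]
    obtain ⟨m, b, e⟩ := x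
    simp only at h1 h2
    rw [h1, h2]

mutual
  theorem validS_mkTriv (τ : Tr d) : Ch.ValidS false (mkTriv τ) := by
    cases τ with
    | node a k L B =>
      rw [mkTriv]
      refine Ch.ValidS.node (fun i => Nat.zero_le _) (fun _ => rfl) ?_ ?_ ?_ ?_ ?_
      · intro _ x hx
        simp only [List.mem_map] at hx
        obtain ⟨l, _, rfl⟩ := hx
        exact ⟨rfl, rfl⟩
      · intro _ y hy
        rw [mkTrivB_eq_map] at hy
        simp only [List.mem_map] at hy
        obtain ⟨z, _, rfl⟩ := hy
        exact ⟨rfl, rfl⟩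
      · intro x hx
        simp only [List.mem_map] at hx
        obtain ⟨l, _, rfl⟩ := hx
        simp
      · intro y hy
        rw [mkTrivB_eq_map] at hy
        simp only [List.mem_map] at hy
        obtain ⟨z, _, rfl⟩ := hy
        simp
      · exact fun y hy => validS_mkTrivB B y hy
  theorem validS_mkTrivB (B : List (Nd d × Tr d)) :
      ∀ y ∈ mkTrivB B, Ch.ValidS y.2.1 y.2.2.2 := by
    cases B with
    | nil => rw [mkTrivB]; simp
    | cons z zs =>
      rw [mkTrivB]
      intro y hy
      rw [List.mem_cons] at hy
      rcases hy with rfl | hy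
      · exact validS_mkTriv z.2
      · exact validS_mkTrivB zs y hy
end

mutual
  theorem validS_false_unique {c : Ch d} (h : Ch.ValidS false c) :
      c = mkTriv (Ch.shape c) := by
    cases c with
    | node a k kA L B =>
      cases h with
      | node h1 h2 h3 h4 h5 h6 h7 =>
        have hkA : kA = 0 := h2 rfl
        have hB' : ∀ y ∈ B, y.2.1 = false ∧ y.2.2.1 = 0 ∧ Ch.ValidS false y.2.2.2 := by
          intro y hy
          refine ⟨(h4 rfl y hy).1, (h4 rfl y hy).2, ?_⟩
          have := h7 y hy
          rwa [(h4 rfl y hy).1] at this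
        rw [Ch.shape, mkTriv, hkA, ← validS_false_uniqueB hB', List.map_map]
        congr 1
        exact (map_fst_triv (h3 rfl)).symm
  theorem validS_false_uniqueB {B : List (Nd d × Bool × Nd d × Ch d)}
      (h : ∀ y ∈ B, y.2.1 = false ∧ y.2.2.1 = 0 ∧ Ch.ValidS false y.2.2.2) :
      B = mkTrivB (Ch.shapeB B) := by
    cases B with
    | nil => rw [Ch.shapeB, mkTrivB]
    | cons y ys =>
      obtain ⟨h1, h2, h3⟩ := h y (by simp)
      rw [Ch.shapeB, mkTrivB]
      rw [← validS_false_uniqueB (fun z hz => h z (List.mem_cons_of_mem _ hz))]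
      have hy : y = (y.1, false, (0 : Nd d), mkTriv (Ch.shape y.2.2.2)) := by
        obtain ⟨m, b, e, c⟩ := y
        simp only at h1 h2 h3 ⊢
        rw [h1, h2, ← validS_false_unique h3]
      rw [← hy]
end

theorem ndFact_zero : ndFact (0 : Nd d) = 1 := by
  simp [ndFact]

mutual
  theorem wt_mkTriv (τ : Tr d) : Ch.wt (mkTriv τ) = 1 := by
    cases τ with
    | node a k L B =>
      rw [mkTriv, Ch.wt, wtB_mkTrivB B]
      simp [List.map_map, Function.comp_def, ndFact_zero]
  theorem wtB_mkTrivB (B : List (Nd d × Tr d)) : Ch.wtB (mkTrivB B) = 1 := by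
    cases B with
    | nil => rw [mkTrivB, Ch.wtB]
    | cons y ys =>
      rw [mkTrivB, Ch.wtB, wt_mkTriv y.2, wtB_mkTrivB ys]
      simp [ndFact_zero]
end

end Aux4
section Aux5
variable {d : ℕ} {R : Set (Multiset (ET d))} {s : Fin d → ℝ} {cXi cI : ℝ}

theorem TPlusRed_mul {x y : Tr d} (hx : Tr.rootO x = 0) (hy : Tr.rootO y = 0) :
    TPlusRed R s cXi cI (Tr.mul x y) ↔
      TPlusRed R s cXi cI x ∧ TPlusRed R s cXi cI y := by
  cases x with
  | node a k L B =>
    cases y with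
    | node a' k' L' B' =>
      simp only [Tr.rootO] at hx hy
      subst hx; subst hy
      simp only [Tr.mul, TPlusRed, List.append_eq_nil_iff, List.mem_append, add_zero]
      constructor
      · rintro ⟨-, ⟨hL, hL'⟩, hB⟩
        exact ⟨⟨trivial, hL, fun z hz => hB z (Or.inl hz)⟩,
          ⟨trivial, hL', fun z hz => hB z (Or.inr hz)⟩⟩
      · rintro ⟨⟨-, hL, hB⟩, ⟨-, hL', hB'⟩⟩
        exact ⟨trivial, ⟨hL, hL'⟩, fun z hz => hz.elim (hB z) (hB' z)⟩

theorem TPlusRed_one : TPlusRed R s cXi cI (Tr.one d) := by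
  simp [TPlusRed, Tr.one]

theorem TPlus_CB (cs : List (Nd d × Bool × Nd d × Ch d)) :
    TPlusRed R s cXi cI (setO0 (Ch.contractB s cXi cI (Tr.one d) cs)) ↔
      ∀ y ∈ cs, TPlusRed R s cXi cI (setO0 (item s cXi cI y)) := by
  induction cs with
  | nil => simpa [Ch.contractB, Tr.one, setO0, setO0B] using TPlusRed_one
  | cons y ys ih =>
    rw [CB_cons, setO0_mul, TPlusRed_mul (rootO_setO0 _) (rootO_setO0 _)]
    simp only [List.mem_cons]
    constructor
    · rintro ⟨h1, h2⟩
      rintro z (rfl | hz)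
      · exact h1
      · exact ih.mp h2 z hz
    · intro h
      exact ⟨h y (Or.inl rfl), ih.mpr fun z hz => h z (Or.inr hz)⟩

mutual
  theorem ZeroO_setO0 (τ : Tr d) : Tr.ZeroO (setO0 τ) := by
    cases τ with
    | node a k L B =>
      rw [setO0]
      exact Tr.ZeroO.node (ZeroO_setO0B B)
  theorem ZeroO_setO0B (B : List (Nd d × Tr d)) : ∀ y ∈ setO0B B, Tr.ZeroO y.2 := by
    cases B with
    | nil => rw [setO0B]; simp
    | cons y ys =>
      rw [setO0B]
      intro z hz
      rw [List.mem_cons] at hz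
      rcases hz with rfl | hz
      · exact ZeroO_setO0 y.2
      · exact ZeroO_setO0B ys z hz
end

theorem lowIdx_mem {s : Fin d → ℝ} (hs : ∀ i, 1 ≤ s i) (c : ℝ) (l : Nd d) :
    l ∈ lowIdx s c ↔ Tr.degN s l < c := by
  rw [lowIdx, Finset.mem_filter]
  constructor
  · exact fun h => h.2
  · intro h
    refine ⟨?_, h⟩
    rw [Fintype.mem_piFinset]
    intro i
    rw [Finset.mem_range]
    have h1 : (l i : ℝ) ≤ Tr.degN s l := by
      rw [Tr.degN]
      calc (l i : ℝ) = (l i : ℝ) * 1 := by ring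
      _ ≤ (l i : ℝ) * s i := by
          exact mul_le_mul_of_nonneg_left (hs i) (Nat.cast_nonneg _)
      _ ≤ ∑ j, (l j : ℝ) * s j := by
          refine Finset.single_le_sum (f := fun j => (l j : ℝ) * s j) ?_ (Finset.mem_univ i)
          intro j _
          exact mul_nonneg (Nat.cast_nonneg _) (le_trans zero_le_one (hs j))
    have h2 : (l i : ℝ) ≤ max c 0 := le_trans h1 (le_max_of_le_left h.le)
    have h3 : (l i : ℝ) ≤ (Nat.ceil (max c 0) : ℝ) := le_trans h2 (Nat.le_ceil _)
    have := Nat.cast_le.mp h3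
    omega

theorem TPlusRed_single_plant {R : Set (Multiset (ET d))} {s : Fin d → ℝ} {cXi cI : ℝ}
    (p : Nd d) (t : Tr d) :
    TPlusRed R s cXi cI (Tr.node 0 0 [] [(p, t)]) ↔
      (Tr.ZeroO t ∧ Tr.Conforms R t ∧ 0 < Tr.deg s cXi cI t + cI - Tr.degN s p) := by
  simp [TPlusRed]

end Aux5
section Aux6
variable {d : ℕ}

theorem mul2_single_single (p q : Tr d × Tr d) (c c' : ℝ) :
    mul2 (Finsupp.single p c) (Finsupp.single q c') =
      Finsupp.single (Tr.mul p.1 q.1, Tr.mul p.2 q.2) (c * c') := by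
  rw [mul2, Finsupp.sum_single_index, Finsupp.sum_single_index]
  · simp
  · rw [Finsupp.sum_single_index] <;> simp

theorem mul2_add_left (u u' v : (Tr d × Tr d) →₀ ℝ) :
    mul2 (u + u') v = mul2 u v + mul2 u' v := by
  rw [mul2, Finsupp.sum_add_index] <;> simp [mul2, add_mul, Finsupp.sum_add]

theorem mul2_add_right (u v v' : (Tr d × Tr d) →₀ ℝ) :
    mul2 u (v + v') = mul2 u v + mul2 u v' := by
  rw [mul2, mul2, mul2, ← Finsupp.sum_add]
  congr 1
  funext p c
  rw [Finsupp.sum_add_index] <;> simp [mul_add]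

@[simp] theorem mul2_zero_left (v : (Tr d × Tr d) →₀ ℝ) : mul2 0 v = 0 := by
  simp [mul2]

@[simp] theorem mul2_zero_right (u : (Tr d × Tr d) →₀ ℝ) : mul2 u 0 = 0 := by
  simp [mul2]

def mul2R (v : (Tr d × Tr d) →₀ ℝ) : ((Tr d × Tr d) →₀ ℝ) →+ ((Tr d × Tr d) →₀ ℝ) :=
  AddMonoidHom.mk' (fun u => mul2 u v) (fun u u' => mul2_add_left u u' v)

def mul2L (u : (Tr d × Tr d) →₀ ℝ) : ((Tr d × Tr d) →₀ ℝ) →+ ((Tr d × Tr d) →₀ ℝ) :=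
  AddMonoidHom.mk' (fun v => mul2 u v) (fun v v' => mul2_add_right u v v')

theorem mul2_sum_sum {α β : Type*} (S : Finset α) (T : Finset β)
    (f : α → (Tr d × Tr d) →₀ ℝ) (g : β → (Tr d × Tr d) →₀ ℝ) :
    mul2 (∑ i ∈ S, f i) (∑ j ∈ T, g j) = ∑ i ∈ S, ∑ j ∈ T, mul2 (f i) (g j) := by
  have h1 : mul2 (∑ i ∈ S, f i) (∑ j ∈ T, g j)
      = ∑ i ∈ S, mul2 (f i) (∑ j ∈ T, g j) := map_sum (mul2R _) f S
  rw [h1]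
  refine Finset.sum_congr rfl fun i _ => ?_
  exact map_sum (mul2L (f i)) g T

theorem sum_single_apply {α : Type*} (F : Finset α) (π : α → Tr d × Tr d) (w : α → ℝ)
    (σ : Tr d × Tr d) :
    (∑ c ∈ F, Finsupp.single (π c) (w c)) σ =
      ∑ c ∈ F.filter (fun c => π c = σ), w c := by
  rw [Finset.sum_apply']
  rw [Finset.sum_filter]
  refine Finset.sum_congr rfl fun c _ => ?_
  rw [Finsupp.single_apply]


end Aux6
section Aux7
variable {d : ℕ} (s : Fin d → ℝ) (cXi cI : ℝ)

def pl (m : Nd d) (z : Bool × Nd d × Ch d) : Tr d :=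
  if z.1 then Tr.plant m (Ch.extr z.2.2) else Tr.Xpow z.2.1

def pr (m : Nd d) (τ : Tr d) (z : Bool × Nd d × Ch d) : Tr d :=
  if z.1 then setO0 (Ch.contract s cXi cI z.2.2) else Tr.plant (z.2.1 + m) τ

def pw (z : Bool × Nd d × Ch d) : ℝ :=
  if z.1 then Ch.wt z.2.2 else ((ndFact z.2.1 : ℝ))⁻¹

def EFin (m : Nd d) (τ : Tr d) : Finset (Bool × Nd d × Ch d) :=
  ((chFin s cXi cI τ).image fun c => (true, (0 : Nd d), c)) ∪
    ((lowIdx s (Tr.deg s cXi cI τ + cI - Tr.degN s m)).image fun e => (false, e, mkTriv τ))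

theorem chBFin_cons (y : Nd d × Tr d) (ys : List (Nd d × Tr d)) :
    chBFin s cXi cI (y :: ys) =
      ((EFin s cXi cI y.1 y.2) ×ˢ chBFin s cXi cI ys).image fun z => (y.1, z.1) :: z.2 := by
  rw [chBFin, EFin]

theorem dpI_eq (m : Nd d) (τ : Tr d) (hZ : Tr.ZeroO τ)
    (hdp : dp s cXi cI τ = ∑ c ∈ chFin s cXi cI τ,
      Finsupp.single (Ch.extr c, setO0 (Ch.contract s cXi cI c)) (Ch.wt c)) :
    dpI s cXi cI m τ (dp s cXi cI τ) =
      ∑ z ∈ EFin s cXi cI m τ,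
        Finsupp.single (pl m z, pr s cXi cI m τ z) (pw z) := by
  rw [dpI, hdp]
  have h1 : ((∑ c ∈ chFin s cXi cI τ,
        Finsupp.single (Ch.extr c, setO0 (Ch.contract s cXi cI c)) (Ch.wt c)).sum
      fun p c => Finsupp.single (Tr.plant m p.1, p.2) c)
      = Finsupp.mapDomain (fun p : Tr d × Tr d => (Tr.plant m p.1, p.2))
          (∑ c ∈ chFin s cXi cI τ,
            Finsupp.single (Ch.extr c, setO0 (Ch.contract s cXi cI c)) (Ch.wt c)) := rfl
  rw [h1, EFin]
  have hdisj : Disjoint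
      ((chFin s cXi cI τ).image fun c => (true, (0 : Nd d), c))
      ((lowIdx s (Tr.deg s cXi cI τ + cI - Tr.degN s m)).image
        fun e => (false, e, mkTriv τ)) := by
    rw [Finset.disjoint_left]
    rintro z hz1 hz2
    simp only [Finset.mem_image] at hz1 hz2
    obtain ⟨c, -, rfl⟩ := hz1
    obtain ⟨e, -, h⟩ := hz2
    exact Bool.noConfusion (congrArg Prod.fst h)
  rw [Finset.sum_union hdisj]
  congr 1
  · rw [Finsupp.mapDomain_finset_sum,
      Finset.sum_image (fun c _ c' _ h => by
        exact congrArg (fun z : Bool × Nd d × Ch d => z.2.2) h)]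
    refine Finset.sum_congr rfl fun c _ => ?_
    rw [Finsupp.mapDomain_single]
    simp [pl, pr, pw]
  · rw [Finset.sum_image (fun e _ e' _ h => by
      exact congrArg (fun z => z.2.1) h)]
    have hdegp : Tr.degp s cXi cI τ = Tr.deg s cXi cI τ := by
      rw [Tr.degp, oSum_eq_zero hZ, add_zero]
    rw [hdegp]
    simp [pl, pr, pw]
end Aux7
section Aux8
variable {d : ℕ} (s : Fin d → ℝ) (cXi cI : ℝ)

theorem extr_assemble (a : ℝ) (k n : Nd d) (L : List (Nd d))
    (cs : List (Nd d × Bool × Nd d × Ch d)) :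
    Ch.extr (Ch.node a k n (L.map fun l => (l, true, 0)) cs) =
      Tr.mul (Tr.node a 0 L [])
        (Tr.mul (Tr.Xpow n) (Tr.node 0 (eSum cs) [] (Ch.extrB cs))) := by
  rw [Ch.extr]
  simp [Tr.mul, Tr.Xpow, List.map_map, Function.comp_def, list_sum_map_zero,
    List.filterMap_map, eSum]

theorem contract_assemble (a : ℝ) (k n : Nd d) (L : List (Nd d))
    (cs : List (Nd d × Bool × Nd d × Ch d)) :
    setO0 (Ch.contract s cXi cI (Ch.node a k n (L.map fun l => (l, true, 0)) cs)) =
      Tr.mul (Tr.one d) (Tr.mul (Tr.Xpow (k - n))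
        (setO0 (Ch.contractB s cXi cI (Tr.one d) cs))) := by
  rw [contract_node, setO0_mul, Tr.one_mul]
  congr 1
  rw [setO0]
  simp [Tr.Xpow, List.filterMap_map, setO0B]

theorem wt_assemble (a : ℝ) (k n : Nd d) (L : List (Nd d))
    (cs : List (Nd d × Bool × Nd d × Ch d)) :
    Ch.wt (Ch.node a k n (L.map fun l => (l, true, 0)) cs) =
      1 * ((∏ i, ((k i).choose (n i) : ℝ)) * Ch.wtB cs) := by
  rw [Ch.wt]
  simp [List.map_map, Function.comp_def, ndFact_zero]

mutual
  theorem main_tree (s : Fin d → ℝ) (cXi cI : ℝ) (τ : Tr d) (h : Tr.ZeroO τ) :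
      dp s cXi cI τ = ∑ c ∈ chFin s cXi cI τ,
        Finsupp.single (Ch.extr c, setO0 (Ch.contract s cXi cI c)) (Ch.wt c) := by
    cases τ with
    | node a k L B =>
      have hB : ∀ y ∈ B, Tr.ZeroO y.2 := by cases h with | node hB => exact hB
      rw [dp, main_list s cXi cI B hB, dpX, mul2_sum_sum]
      have hout : mul2 (Finsupp.single ((Tr.node a 0 L [], Tr.one d) : Tr d × Tr d) 1)
          (∑ i ∈ Finset.Iic k, ∑ j ∈ chBFin s cXi cI B,
            mul2 (Finsupp.single ((Tr.Xpow i, Tr.Xpow (k - i)) : Tr d × Tr d)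
                (∏ t, ((k t).choose (i t) : ℝ)))
              (Finsupp.single
                ((Tr.node 0 (eSum j) [] (Ch.extrB j),
                  setO0 (Ch.contractB s cXi cI (Tr.one d) j)) : Tr d × Tr d)
                (Ch.wtB j)))
          = ∑ i ∈ Finset.Iic k, ∑ j ∈ chBFin s cXi cI B,
              mul2 (Finsupp.single ((Tr.node a 0 L [], Tr.one d) : Tr d × Tr d) 1)
                (mul2 (Finsupp.single ((Tr.Xpow i, Tr.Xpow (k - i)) : Tr d × Tr d)
                    (∏ t, ((k t).choose (i t) : ℝ)))
                  (Finsupp.single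
                    ((Tr.node 0 (eSum j) [] (Ch.extrB j),
                      setO0 (Ch.contractB s cXi cI (Tr.one d) j)) : Tr d × Tr d)
                    (Ch.wtB j))) := by
        exact (map_sum (mul2L _) _ (Finset.Iic k)).trans
          (Finset.sum_congr rfl fun i _ => map_sum (mul2L _) _ _)
      rw [hout, chFin]
      rw [Finset.sum_image (fun z _ z' _ hzz => by
        injection hzz with h1 h2 h3 h4 h5
        exact Prod.ext h3 h5)]
      rw [Finset.sum_product]
      refine Finset.sum_congr rfl fun n hn => Finset.sum_congr rfl fun cs hcs => ?_
      rw [mul2_single_single, mul2_single_single, extr_assemble, contract_assemble,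
        wt_assemble]
  theorem main_list (s : Fin d → ℝ) (cXi cI : ℝ) (B : List (Nd d × Tr d)) (h : ∀ y ∈ B, Tr.ZeroO y.2) :
      dpB s cXi cI B = ∑ cs ∈ chBFin s cXi cI B,
        Finsupp.single
          ((Tr.node 0 (eSum cs) [] (Ch.extrB cs),
            setO0 (Ch.contractB s cXi cI (Tr.one d) cs)) : Tr d × Tr d)
          (Ch.wtB cs) := by
    cases B with
    | nil =>
      rw [dpB, chBFin]
      rw [Finset.sum_singleton]
      have h1 : setO0 (Ch.contractB s cXi cI (Tr.one d) []) = Tr.one d := by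
        rw [CB_nil, Tr.one, setO0, setO0B]
      rw [h1, Ch.wtB]
      rfl
    | cons y ys =>
      have hZy : Tr.ZeroO y.2 := h y (by simp)
      rw [dpB, main_list s cXi cI ys (fun z hz => h z (List.mem_cons_of_mem _ hz)),
        dpI_eq s cXi cI y.1 y.2 hZy (main_tree s cXi cI y.2 hZy), mul2_sum_sum,
        chBFin_cons]
      rw [Finset.sum_image (fun z _ z' _ hz => by
        injection hz with h1 h2
        injection h1 with h11 h12
        exact Prod.ext h12 h2)]
      rw [Finset.sum_product]
      refine Finset.sum_congr rfl fun z hz => Finset.sum_congr rfl fun cs hcs => ?_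
      rw [mul2_single_single]
      rw [EFin, Finset.mem_union] at hz
      rcases hz with hz | hz
      · rw [Finset.mem_image] at hz
        obtain ⟨c, hc, rfl⟩ := hz
        rw [CB_cons, setO0_mul]
        simp only [pl, pr, pw, item, if_pos]
        rw [Ch.wtB, Ch.extrB]
        simp [eSum, Tr.mul, Tr.plant, ndFact_zero]
      · rw [Finset.mem_image] at hz
        obtain ⟨e, he, rfl⟩ := hz
        rw [CB_cons, setO0_mul]
        have hset : setO0 (Tr.node 0 0 []
            [(y.1 + e, Ch.contract s cXi cI (mkTriv y.2))]) =
            Tr.node 0 0 [] [(y.1 + e, y.2)] := by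
          rw [setO0, setO0B, setO0B, contract_mkTriv, setO0_of_zeroO hZy]
        simp only [pl, pr, pw, item, Bool.false_eq_true, if_false]
        rw [hset, Ch.wtB, Ch.extrB, wt_mkTriv]
        simp [eSum, Tr.mul, Tr.plant, Tr.Xpow, ndFact_zero, add_comm]
end

end Aux8
section Aux9
variable {d : ℕ}

theorem map_fst_trivT {L : List (Nd d × Bool × Nd d)}
    (h : ∀ x ∈ L, x.2.1 = true ∧ x.2.2 = 0) :
    List.map (fun x => (x.1, true, (0 : Nd d))) L = L := by
  induction L with
  | nil => simp
  | cons x xs ih =>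
    obtain ⟨h1, h2⟩ := h x (by simp)
    rw [List.map_cons, ih (fun z hz => h z (List.mem_cons_of_mem _ hz))]
    obtain ⟨m, b, e⟩ := x
    simp only at h1 h2
    rw [h1, h2]

theorem TPlusRed_Xpow {R : Set (Multiset (ET d))} {s : Fin d → ℝ} {cXi cI : ℝ}
    (k : Nd d) : TPlusRed R s cXi cI (Tr.Xpow k) := by
  simp [TPlusRed, Tr.Xpow]

theorem rootO_mul (x y : Tr d) : Tr.rootO (Tr.mul x y) = Tr.rootO x + Tr.rootO y := by
  cases x; cases y; simp [Tr.mul, Tr.rootO]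

mutual
  theorem mem_chFin_iff (R : Set (Multiset (ET d))) (s : Fin d → ℝ) (cXi cI : ℝ)
      (hs : ∀ i, 1 ≤ s i) (τ : Tr d) (hZ : Tr.ZeroO τ) (hC : Tr.Conforms R τ)
      (c : Ch d) :
      c ∈ chFin s cXi cI τ ↔ Ch.shape c = τ ∧ Ch.ValidS true c ∧
        TPlusRed R s cXi cI (setO0 (Ch.contract s cXi cI c)) := by
    cases τ with
    | node a k L B =>
      have hZB : ∀ y ∈ B, Tr.ZeroO y.2 := by cases hZ with | node hB => exact hB
      have hCB : ∀ y ∈ B, Tr.Conforms R y.2 := by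
        cases hC with | node _ hB => exact hB
      have hBiff := fun cs => mem_chBFin_iff R s cXi cI hs B
        (fun y hy => ⟨hZB y hy, hCB y hy⟩) cs
      constructor
      · intro hc
        rw [chFin, Finset.mem_image] at hc
        obtain ⟨⟨n, cs⟩, hmem, rfl⟩ := hc
        rw [Finset.mem_product, Finset.mem_Iic] at hmem
        obtain ⟨hn, hcs⟩ := hmem
        rw [hBiff] at hcs
        obtain ⟨hsh, hedge⟩ := hcs
        refine ⟨?_, ?_, ?_⟩
        · rw [Ch.shape, hsh]
          simp [List.map_map, Function.comp_def]
        · refine Ch.ValidS.node hn (fun hf => by exact absurd hf (by simp))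
            (fun hf => by exact absurd hf (by simp))
            (fun hf => by exact absurd hf (by simp)) ?_ ?_ ?_
          · intro x hx
            simp only [List.mem_map] at hx
            obtain ⟨l, -, rfl⟩ := hx
            simp
          · exact fun y hy ht => (hedge y hy).2.1 ht
          · exact fun y hy => (hedge y hy).1
        · rw [contract_assemble,
            TPlusRed_mul (by rfl)
              (by rw [rootO_mul, rootO_setO0]; simp [Tr.Xpow, Tr.rootO]),
            TPlusRed_mul (by simp [Tr.Xpow, Tr.rootO]) (rootO_setO0 _)]
          refine ⟨TPlusRed_one, TPlusRed_Xpow _, ?_⟩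
          rw [TPlus_CB]
          exact fun y hy => (hedge y hy).2.2
      · rintro ⟨hsh, hval, hplus⟩
        cases c with
        | node a' k' kA L'' cs =>
          rw [Ch.shape] at hsh
          injection hsh with e1 e2 e3 e4
          subst e1; subst e2
          cases hval with
          | node h1 h2 h3 h4 h5 h6 h7 =>
            rw [contract_node, setO0_mul, TPlusRed_mul (rootO_setO0 _) (rootO_setO0 _)]
              at hplus
            obtain ⟨hp1, hp2⟩ := hplus
            have hLnil : (L''.filterMap fun x =>
                if x.2.1 then none else some (x.1 + x.2.2)) = [] := by
              rw [setO0] at hp1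
              exact hp1.2.1
            have hLtrue : ∀ x ∈ L'', x.2.1 = true ∧ x.2.2 = 0 := by
              intro x hx
              rw [List.filterMap_eq_nil_iff] at hLnil
              have := hLnil x hx
              by_cases hb : x.2.1
              · exact ⟨hb, h5 x hx hb⟩
              · rw [if_neg hb] at this
                exact absurd this (by simp)
            rw [chFin, Finset.mem_image]
            refine ⟨(kA, cs), ?_, ?_⟩
            · rw [Finset.mem_product, Finset.mem_Iic]
              refine ⟨h1, ?_⟩
              rw [hBiff]
              refine ⟨e4, fun y hy => ⟨h7 y hy, h6 y hy, ?_⟩⟩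
              rw [TPlus_CB] at hp2
              exact hp2 y hy
            · congr 1
              rw [← e3, List.map_map]
              exact map_fst_trivT hLtrue
  theorem mem_chBFin_iff (R : Set (Multiset (ET d))) (s : Fin d → ℝ) (cXi cI : ℝ)
      (hs : ∀ i, 1 ≤ s i) (B : List (Nd d × Tr d))
      (h : ∀ y ∈ B, Tr.ZeroO y.2 ∧ Tr.Conforms R y.2)
      (cs : List (Nd d × Bool × Nd d × Ch d)) :
      cs ∈ chBFin s cXi cI B ↔ Ch.shapeB cs = B ∧ ∀ y ∈ cs,
        Ch.ValidS y.2.1 y.2.2.2 ∧ (y.2.1 = true → y.2.2.1 = 0) ∧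
        TPlusRed R s cXi cI (setO0 (item s cXi cI y)) := by
    cases B with
    | nil =>
      rw [chBFin, Finset.mem_singleton]
      constructor
      · rintro rfl
        exact ⟨rfl, by simp⟩
      · rintro ⟨hsh, -⟩
        cases cs with
        | nil => rfl
        | cons z zs => exact absurd hsh (by rw [Ch.shapeB]; simp)
    | cons y ys =>
      obtain ⟨hZy, hCy⟩ := h y (by simp)
      have htail := h
      constructor
      · intro hcs
        rw [chBFin_cons, Finset.mem_image] at hcs
        obtain ⟨⟨z, cs'⟩, hmem, rfl⟩ := hcs
        rw [Finset.mem_product] at hmem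
        obtain ⟨hz, hcs'⟩ := hmem
        rw [mem_chBFin_iff R s cXi cI hs ys
          (fun w hw => h w (List.mem_cons_of_mem _ hw)) cs'] at hcs'
        obtain ⟨hsh', hedge'⟩ := hcs'
        rw [EFin, Finset.mem_union] at hz
        have hhead : Ch.shape z.2.2 = y.2 ∧ Ch.ValidS z.1 z.2.2 ∧
            (z.1 = true → z.2.1 = 0) ∧
            TPlusRed R s cXi cI (setO0 (item s cXi cI (y.1, z))) := by
          rcases hz with hz | hz
          · rw [Finset.mem_image] at hz
            obtain ⟨c₀, hc₀, rfl⟩ := hz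
            rw [mem_chFin_iff R s cXi cI hs y.2 hZy hCy c₀] at hc₀
            exact ⟨hc₀.1, hc₀.2.1, fun _ => rfl, hc₀.2.2⟩
          · rw [Finset.mem_image] at hz
            obtain ⟨e, he, rfl⟩ := hz
            rw [lowIdx_mem hs] at he
            refine ⟨shape_mkTriv y.2, validS_mkTriv y.2, by simp, ?_⟩
            rw [item]
            simp only [Bool.false_eq_true, if_false]
            have hset : setO0 (Tr.node 0 0 []
                [(y.1 + e, Ch.contract s cXi cI (mkTriv y.2))]) =
                Tr.node 0 0 [] [(y.1 + e, y.2)] := by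
              rw [setO0, setO0B, setO0B, contract_mkTriv, setO0_of_zeroO hZy]
            rw [hset, TPlusRed_single_plant]
            refine ⟨hZy, hCy, ?_⟩
            rw [degN_add]
            linarith
        refine ⟨?_, ?_⟩
        · rw [Ch.shapeB, hsh', hhead.1]
        · intro w hw
          rw [List.mem_cons] at hw
          rcases hw with rfl | hw
          · exact ⟨hhead.2.1, hhead.2.2.1, hhead.2.2.2⟩
          · exact hedge' w hw
      · rintro ⟨hsh, hedge⟩
        cases cs with
        | nil => exact absurd hsh (by rw [Ch.shapeB]; simp)
        | cons w ws =>
          rw [Ch.shapeB] at hsh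
          injection hsh with hw1 hw2
          obtain ⟨m', z⟩ := w
          have hm1 : m' = y.1 := congrArg Prod.fst hw1
          have hm2 : Ch.shape z.2.2 = y.2 := congrArg Prod.snd hw1
          subst hm1
          obtain ⟨hv, he0, hp⟩ := hedge (y.1, z) (by simp)
          simp only at hv he0 hp hm2
          rw [chBFin_cons, Finset.mem_image]
          refine ⟨(z, ws), ?_, rfl⟩
          rw [Finset.mem_product]
          refine ⟨?_, ?_⟩
          · rw [EFin, Finset.mem_union]
            obtain ⟨b, e, c₀⟩ := z
            simp only at hv he0 hp hm2
            cases b with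
            | true =>
              left
              rw [Finset.mem_image]
              refine ⟨c₀, ?_, by rw [he0 rfl]⟩
              rw [mem_chFin_iff R s cXi cI hs y.2 hZy hCy c₀]
              rw [item] at hp
              simp only [if_pos] at hp
              exact ⟨hm2, hv, hp⟩
            | false =>
              right
              rw [Finset.mem_image]
              have hc₀ : c₀ = mkTriv y.2 := by
                rw [← hm2]
                exact validS_false_unique hv
              subst hc₀
              refine ⟨e, ?_, rfl⟩
              rw [item] at hp
              simp only [Bool.false_eq_true, if_false] at hp
              have hset : setO0 (Tr.node 0 0 []
                  [(y.1 + e, Ch.contract s cXi cI (mkTriv y.2))]) =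
                  Tr.node 0 0 [] [(y.1 + e, y.2)] := by
                rw [setO0, setO0B, setO0B, contract_mkTriv, setO0_of_zeroO hZy]
              rw [hset, TPlusRed_single_plant] at hp
              rw [lowIdx_mem hs]
              rw [degN_add] at hp
              linarith [hp.2.2]
          · rw [mem_chBFin_iff R s cXi cI hs ys
              (fun w hw => h w (List.mem_cons_of_mem _ hw)) ws]
            exact ⟨hw2, fun w hw => hedge w (List.mem_cons_of_mem _ hw)⟩
end

end Aux9
/-- The global (non-recursive) formula for the coaction
`Δ⁺ : 𝒯 → 𝒯 ⊗ 𝒯₊`: for every strongly conforming tree `τ` its coproduct is the sum,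
over all rooted subtrees `A` of `τ` containing the root, over all `𝔫_A ≤ 𝔫` and all
boundary decorations `𝔢_A`, of
`(1/𝔢_A!) binom(𝔫,𝔫_A) (A, 𝔫_A+π𝔢_A, 𝔢|_A) ⊗ π₊(τ/A, [𝔫-𝔫_A]_A, 𝔢+𝔢_A)`,
expressed here coefficientwise. -/
theorem deltaPlus_global_formula
    (hd : 0 < d) (s : Fin d → ℝ) (hs : ∀ i, 1 ≤ s i)
    (cXi cI : ℝ) (hXi : cXi < 0) (hI : 0 < cI)
    (R : Set (Multiset (ET d))) (hnorm : Normal R) (hsub : Subcritical s cXi cI R)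
    (τ : Tr d) (hτ : τ ∈ Tcirc R) (σ₁ σ₂ : Tr d) :
    dp s cXi cI τ (σ₁, σ₂)
      = ∑ᶠ c ∈ {c : Ch d | Ch.shape c = τ ∧ Ch.ValidS true c ∧ Ch.extr c = σ₁ ∧
          setO0 (Ch.contract s cXi cI c) = σ₂ ∧ TPlusRed R s cXi cI σ₂}, Ch.wt c := by
  obtain ⟨hZ, hC⟩ := hτ
  have hset : {c : Ch d | Ch.shape c = τ ∧ Ch.ValidS true c ∧ Ch.extr c = σ₁ ∧
      setO0 (Ch.contract s cXi cI c) = σ₂ ∧ TPlusRed R s cXi cI σ₂}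
      = ↑((chFin s cXi cI τ).filter fun c =>
          (Ch.extr c, setO0 (Ch.contract s cXi cI c)) = ((σ₁, σ₂) : Tr d × Tr d)) := by
    ext c
    simp only [Set.mem_setOf_eq, Finset.coe_filter,
      mem_chFin_iff R s cXi cI hs τ hZ hC, Prod.mk.injEq]
    constructor
    · rintro ⟨h1, h2, h3, h4, h5⟩
      exact ⟨⟨h1, h2, h4 ▸ h5⟩, h3, h4⟩
    · rintro ⟨⟨h1, h2, h5⟩, h3, h4⟩
      exact ⟨h1, h2, h3, h4, h4 ▸ h5⟩
  rw [hset, finsum_mem_coe_finset, main_tree s cXi cI τ hZ, sum_single_apply]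

end RS
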